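/- For natural numbers k, l, m ≥ 1, the product B(k)·B(l)·B(m) equals B'(k,l,m)·B'', where B'' is the constant matrix [[2,1,1],[1,1,0],[1,1,1]] and B'(k,l,m) = [[k(l-1)+1, k(l(m-1)+m), 2k-1],[l-1, l(m-1)+1, 1],[0, m-1, 1]]. -/

import Mathlib

open Matrix

/-- The matrix `B(k)` from the paper. -/
def Bmat (k : ℕ) : Matrix (Fin 3) (Fin 3) ℤ := !![(k : ℤ), (k : ℤ), 1; 1, 0, 0; 0, 1, 0]

/-- The matrix `B'(k,l,m)` from the paper. -/
def Bp (k l m : ℕ) : Matrix (Fin 3) (Fin 3) ℤ :=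
  !![(k : ℤ) * ((l : ℤ) - 1) + 1, (k : ℤ) * ((l : ℤ) * ((m : ℤ) - 1) + (m : ℤ)), 2 * (k : ℤ) - 1;
     (l : ℤ) - 1, (l : ℤ) * ((m : ℤ) - 1) + 1, 1;
     0, (m : ℤ) - 1, 1]

/-- The constant matrix `B''`. -/
def Bpp : Matrix (Fin 3) (Fin 3) ℤ := !![2, 1, 1; 1, 1, 0; 1, 1, 1]

theorem stmt0 (k l m : ℕ) (hk : 1 ≤ k) (hl : 1 ≤ l) (hm : 1 ≤ m) :
    Bmat k * Bmat l * Bmat m = Bp k l m * Bpp := by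
  simp only [Bmat, Bp, Bpp, Matrix.mul_fin_three]
  norm_num
  ring_nf
  simp
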